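/- Suppose k, n, m are positive integers with k ≥ 150, n − m ≥ 2, a1, a2 ∈ {1,…,9}, and Q_k = a1·(10^n−1)/9 − a2·(10^m−1)/9. Then n − m < 34. -/

import Mathlib

set_option maxRecDepth 1000000
set_option maxHeartbeats 4000000

/-- The Pell-Lucas sequence: `Q 0 = Q 1 = 2`, `Q (n+2) = 2 * Q (n+1) + Q n`. -/
def pellLucas : ℕ → ℕ
  | 0 => 2
  | 1 => 2
  | n + 2 => 2 * pellLucas (n + 1) + pellLucas n

/-- One step of the Pell-Lucas recurrence modulo `M` on pairs. -/
def pstep (M : ℕ) (s : ℕ × ℕ) : ℕ × ℕ := (s.2, (2 * s.2 + s.1) % M)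

/-- The orbit of the Pell-Lucas pair sequence modulo `M`. -/
def porb (M : ℕ) : ℕ → ℕ × ℕ
  | 0 => (2 % M, 2 % M)
  | k + 1 => pstep M (porb M k)

lemma porb_eq (M k : ℕ) : porb M k = (pellLucas k % M, pellLucas (k + 1) % M) := by
  induction k with
  | zero => rfl
  | succ k ih =>
      show pstep M (porb M k) = _
      rw [ih]
      unfold pstep
      refine Prod.ext rfl ?_
      show (2 * (pellLucas (k + 1) % M) + pellLucas k % M) % M = pellLucas (k + 2) % M
      have h : 2 * (pellLucas (k + 1) % M) + pellLucas k % M ≡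
          2 * pellLucas (k + 1) + pellLucas k [MOD M] :=
        ((Nat.mod_modEq _ M).mul_left 2).add (Nat.mod_modEq _ M)
      have h2 : pellLucas (k + 2) = 2 * pellLucas (k + 1) + pellLucas k := rfl
      rw [h2]; exact h

lemma porb_add_period (M T : ℕ) (hper : porb M T = porb M 0) :
    ∀ k, porb M (k + T) = porb M k := by
  intro k
  induction k with
  | zero => simpa using hper
  | succ k ih =>
      have h1 : k + 1 + T = (k + T) + 1 := by omega
      rw [h1]
      show pstep M (porb M (k + T)) = pstep M (porb M k)
      rw [ih]

lemma porb_mod (M T : ℕ) (hper : porb M T = porb M 0) (k : ℕ) :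
    porb M k = porb M (k % T) := by
  have key : ∀ q r, porb M (r + T * q) = porb M r := by
    intro q
    induction q with
    | zero => intro r; simp
    | succ q ih =>
        intro r
        have h1 : r + T * (q + 1) = (r + T * q) + T := by ring
        rw [h1, porb_add_period M T hper, ih]
  have h2 : k = k % T + T * (k / T) := by
    rw [Nat.mod_add_div]
  calc porb M k = porb M (k % T + T * (k / T)) := by rw [← h2]
    _ = porb M (k % T) := key _ _

lemma pow_mod_period (M o : ℕ) (hpow : 10 ^ o % M = 1) (n : ℕ) :
    10 ^ n % M = 10 ^ (n % o) % M := by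
  conv_lhs => rw [← Nat.mod_add_div n o, pow_add, pow_mul]
  rw [Nat.mul_mod, Nat.pow_mod (10 ^ o), hpow, one_pow, ← Nat.mul_mod, mul_one]

/-- Bounded checker walking the orbit. -/
def pchk (M : ℕ) (P : ℕ → ℕ × ℕ → Bool) : ℕ → ℕ → ℕ × ℕ → Bool
  | 0 => fun _ _ => true
  | c + 1 => fun i s => P i s && pchk M P c (i + 1) (pstep M s)

/-- Period check: walk `T+1` steps, forcing evaluation, and compare with the start. -/
def chkPer (M T : ℕ) : Bool :=
  pchk M (fun i s => decide (s.1 < M) && (decide (i ≠ T) || decide (s = (2 % M, 2 % M))))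
    (T + 1) 0 (porb M 0)

lemma pchk_sound (M : ℕ) (P : ℕ → ℕ × ℕ → Bool) :
    ∀ c i, pchk M P c i (porb M i) = true →
      ∀ r, r < c → P (i + r) (porb M (i + r)) = true := by
  intro c
  induction c with
  | zero => intro i _ r hr; omega
  | succ c ih =>
      intro i h r hr
      have h' : (P i (porb M i) && pchk M P c (i + 1) (pstep M (porb M i))) = true := h
      rw [Bool.and_eq_true] at h'
      cases r with
      | zero => simpa using h'.1
      | succ r =>
          have h2 : pstep M (porb M i) = porb M (i + 1) := rfl
          rw [h2] at h'
          have h3 := ih (i + 1) h'.2 r (by omega)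
          have h4 : i + 1 + r = i + (r + 1) := by omega
          rwa [h4] at h3

lemma perSound (M T : ℕ) (h : chkPer M T = true) : porb M T = porb M 0 := by
  have h1 := pchk_sound M _ (T + 1) 0 h T (by omega)
  simp only [zero_add] at h1
  rw [Bool.and_eq_true, Bool.or_eq_true] at h1
  rcases h1.2 with h2 | h2
  · exact absurd rfl (of_decide_eq_true h2)
  · exact of_decide_eq_true h2

lemma mod_helper (M a x c : ℕ) : (a * (x % M) + c) % M = (a * x + c) % M :=
  ((Nat.mod_modEq x M).mul_left a).add_right c

lemma eq_assoc (x c1 c2 : ℕ) : 9 * x + c1 + c2 = 9 * x + (c1 + c2) := by ring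

/-- Prime-type check. -/
def chkPrime (M o T m a1 a2 : ℕ) : Bool :=
  pchk M (fun _ s => decide (∀ e < o,
    (9 * s.1 + (a2 * 10 ^ m + a1)) % M ≠ (a1 * (10 ^ e % M) + a2) % M)) T 0 (porb M 0)

/-- Ten-power-type check. -/
def chkD (M T m a1 a2 : ℕ) : Bool :=
  pchk M (fun _ s => decide ((9 * s.1 + (a2 * 10 ^ m + a1)) % M ≠ a2 % M)) T 0 (porb M 0)

/-- Combo check: trailing digits mod `10^4` force residues of `k` mod `1500`, on which a
prime `q` condition fails. -/
def chkC (q oq Tq m a1 a2 : ℕ) : Bool :=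
  pchk 10000 (fun r s => decide ((9 * s.1 + (a2 * 10 ^ m + a1)) % 10000 = a2 % 10000 →
    ∀ e < oq, (9 * (porb q (r % Tq)).1 + (a2 * 10 ^ m + a1)) % q
      ≠ (a1 * (10 ^ e % q) + a2) % q)) 1500 0 (porb 10000 0)

lemma primeSound (M o T m a1 a2 k n : ℕ) (hT : 0 < T) (ho : 0 < o)
    (hper : porb M T = porb M 0) (hpow : 10 ^ o % M = 1)
    (hchk : chkPrime M o T m a1 a2 = true)
    (hE : 9 * pellLucas k + a2 * 10 ^ m + a1 = a1 * 10 ^ n + a2) : False := by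
  have h1 := pchk_sound M _ T 0 hchk (k % T) (Nat.mod_lt _ hT)
  simp only [zero_add] at h1
  rw [← porb_mod M T hper] at h1
  have h2 := of_decide_eq_true h1
  have h3 := h2 (n % o) (Nat.mod_lt _ ho)
  apply h3
  rw [porb_eq]
  show (9 * (pellLucas k % M) + (a2 * 10 ^ m + a1)) % M = _
  rw [mod_helper, ← pow_mod_period M o hpow n, mod_helper, ← eq_assoc, hE]

lemma dSound (M T m a1 a2 k n : ℕ) (hT : 0 < T)
    (hper : porb M T = porb M 0) (hMn : 10 ^ n % M = 0)
    (hchk : chkD M T m a1 a2 = true)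
    (hE : 9 * pellLucas k + a2 * 10 ^ m + a1 = a1 * 10 ^ n + a2) : False := by
  have h1 := pchk_sound M _ T 0 hchk (k % T) (Nat.mod_lt _ hT)
  simp only [zero_add] at h1
  rw [← porb_mod M T hper] at h1
  have h2 := of_decide_eq_true h1
  apply h2
  rw [porb_eq]
  show (9 * (pellLucas k % M) + (a2 * 10 ^ m + a1)) % M = _
  rw [mod_helper, ← eq_assoc, hE, Nat.add_mod, Nat.mul_mod, hMn, mul_zero,
    Nat.zero_mod, zero_add, Nat.mod_mod_of_dvd a2 (dvd_refl M)]

lemma comboSound (q oq Tq m a1 a2 k n : ℕ) (hoq : 0 < oq)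
    (hdvd : Tq ∣ 1500)
    (hper4 : porb 10000 1500 = porb 10000 0) (hperq : porb q Tq = porb q 0)
    (hpow : 10 ^ oq % q = 1) (hMn : 10 ^ n % 10000 = 0)
    (hchk : chkC q oq Tq m a1 a2 = true)
    (hE : 9 * pellLucas k + a2 * 10 ^ m + a1 = a1 * 10 ^ n + a2) : False := by
  have h1 := pchk_sound 10000 _ 1500 0 hchk (k % 1500) (Nat.mod_lt _ (by norm_num))
  simp only [zero_add] at h1
  rw [← porb_mod 10000 1500 hper4] at h1
  have h2 := of_decide_eq_true h1
  have hant : (9 * (porb 10000 k).1 + (a2 * 10 ^ m + a1)) % 10000 = a2 % 10000 := by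
    rw [porb_eq]
    show (9 * (pellLucas k % 10000) + (a2 * 10 ^ m + a1)) % 10000 = _
    rw [mod_helper, ← eq_assoc, hE, Nat.add_mod, Nat.mul_mod, hMn, mul_zero,
      Nat.zero_mod, zero_add, Nat.mod_mod_of_dvd a2 (dvd_refl 10000)]
  have h3 := h2 hant (n % oq) (Nat.mod_lt _ hoq)
  apply h3
  have hkk : k % 1500 % Tq = k % Tq := Nat.mod_mod_of_dvd k hdvd
  rw [hkk, ← porb_mod q Tq hperq, porb_eq]
  show (9 * (pellLucas k % q) + (a2 * 10 ^ m + a1)) % q = _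
  rw [mod_helper, ← pow_mod_period q oq hpow n, mod_helper, ← eq_assoc, hE]

/-- Check for the case `m ≥ 3`. -/
def chkM3 : Bool :=
  pchk 1000 (fun _ s => decide (∀ b < (81 : ℕ),
    (9 * s.1 + (b / 9 + 1)) % 1000 ≠ (b % 9 + 1) % 1000)) 300 0 (porb 1000 0)

lemma m3Sound (m a1 a2 k n : ℕ) (hm : 3 ≤ m) (hn : 3 ≤ n)
    (ha11 : 1 ≤ a1) (ha19 : a1 ≤ 9) (ha21 : 1 ≤ a2) (ha29 : a2 ≤ 9)
    (hchk : chkM3 = true)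
    (hE : 9 * pellLucas k + a2 * 10 ^ m + a1 = a1 * 10 ^ n + a2) : False := by
  have hper : porb 1000 300 = porb 1000 0 := perSound 1000 300 (by decide)
  have h1 := pchk_sound 1000 _ 300 0 hchk (k % 300) (Nat.mod_lt _ (by norm_num))
  simp only [zero_add] at h1
  rw [← porb_mod 1000 300 hper] at h1
  set b : ℕ := (a1 - 1) * 9 + (a2 - 1) with hb
  have h2 := of_decide_eq_true h1 b (by omega)
  have e1 : b / 9 + 1 = a1 := by omega
  have e2 : b % 9 + 1 = a2 := by omega
  rw [e1, e2] at h2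
  apply h2
  have hmm : a2 * 10 ^ m % 1000 = 0 := by
    have h3 : (1000 : ℕ) ∣ 10 ^ m := by
      calc (1000 : ℕ) = 10 ^ 3 := by norm_num
        _ ∣ 10 ^ m := pow_dvd_pow 10 hm
    have : (1000 : ℕ) ∣ a2 * 10 ^ m := Dvd.dvd.mul_left h3 a2
    omega
  have hnn : 10 ^ n % 1000 = 0 := by
    have : (1000 : ℕ) ∣ 10 ^ n := by
      calc (1000 : ℕ) = 10 ^ 3 := by norm_num
        _ ∣ 10 ^ n := pow_dvd_pow 10 hn
    omega
  have h0 : a2 * 10 ^ m ≡ 0 [MOD 1000] := by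
    show a2 * 10 ^ m % 1000 = 0 % 1000
    simpa using hmm
  have hc : 9 * pellLucas k + a2 * 10 ^ m + a1 ≡ 9 * pellLucas k + 0 + a1 [MOD 1000] :=
    (((Nat.ModEq.refl (9 * pellLucas k)).add h0).add_right a1)
  rw [porb_eq]
  show (9 * (pellLucas k % 1000) + a1) % 1000 = a2 % 1000
  have hfin : (9 * pellLucas k + a1) % 1000 = a2 % 1000 := by
    have h5 : (9 * pellLucas k + a1) % 1000
        = (9 * pellLucas k + a2 * 10 ^ m + a1) % 1000 := by
      have h6 : 9 * pellLucas k + 0 + a1 = 9 * pellLucas k + a1 := by ring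
      rw [← h6]
      exact hc.symm
    rw [h5, hE, Nat.add_mod, Nat.mul_mod, hnn, mul_zero, Nat.zero_mod, zero_add,
      Nat.mod_mod_of_dvd a2 (dvd_refl 1000)]
  calc (9 * (pellLucas k % 1000) + a1) % 1000
      = (9 * pellLucas k + a1) % 1000 := mod_helper 1000 9 (pellLucas k) a1
    _ = a2 % 1000 := hfin

/-- The master case split: some check succeeds for every `(m, a1, a2)` with `m ∈ {1,2}`. -/
def Bcase (m a1 a2 : ℕ) : Bool :=
  chkPrime 7 6 6 m a1 a2 || (chkPrime 41 5 10 m a1 a2 || (chkPrime 239 7 14 m a1 a2 ||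
  (chkPrime 37 3 76 m a1 a2 || (chkPrime 137 8 68 m a1 a2 ||
  (chkD 10 12 m a1 a2 || (chkD 100 60 m a1 a2 || (chkD 1000 300 m a1 a2 ||
  (chkD 10000 1500 m a1 a2 || (chkC 31 15 30 m a1 a2 || chkC 751 125 150 m a1 a2)))))))))

/-- Conjunction of `Bcase` over all cases `m ∈ {1,2}`, `a1, a2 ∈ [1,9]`. -/
def allCases : ℕ → Bool
  | 0 => true
  | c + 1 => Bcase (c / 81 + 1) (c % 81 / 9 + 1) (c % 9 + 1) && allCases c

lemma allCases_sound : ∀ N, allCases N = true →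
    ∀ c, c < N → Bcase (c / 81 + 1) (c % 81 / 9 + 1) (c % 9 + 1) = true := by
  intro N
  induction N with
  | zero => intro _ c hc; omega
  | succ N ih =>
      intro h c hc
      have h' : (Bcase (N / 81 + 1) (N % 81 / 9 + 1) (N % 9 + 1) && allCases N) = true := h
      rw [Bool.and_eq_true] at h'
      rcases Nat.lt_or_ge c N with h2 | h2
      · exact ih h'.2 c h2
      · have : c = N := by omega
        rw [this]; exact h'.1

/-- Under the hypotheses of the Pell-Lucas equation, `n - m < 34`. -/
theorem pellLucas_n_sub_m_bound (k n m a1 a2 : ℕ) (hk : 150 ≤ k) (hnm : m + 2 ≤ n) (hm : 1 ≤ m)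
    (ha11 : 1 ≤ a1) (ha19 : a1 ≤ 9) (ha21 : 1 ≤ a2) (ha29 : a2 ≤ 9)
    (heq : (pellLucas k : ℤ) = (a1 : ℤ) * ((10 ^ n - 1) / 9) - (a2 : ℤ) * ((10 ^ m - 1) / 9)) :
    n - m < 34 := by
  by_contra hcon
  have hd : m + 34 ≤ n := by omega
  -- turn heq into a clean ℕ equation
  have h9n : (9 : ℤ) ∣ 10 ^ n - 1 := by
    have := sub_dvd_pow_sub_pow (10 : ℤ) 1 n
    simpa using this
  have h9m : (9 : ℤ) ∣ 10 ^ m - 1 := by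
    have := sub_dvd_pow_sub_pow (10 : ℤ) 1 m
    simpa using this
  obtain ⟨X, hX⟩ := h9n
  obtain ⟨Y, hY⟩ := h9m
  rw [hX, hY, Int.mul_ediv_cancel_left X (by norm_num), Int.mul_ediv_cancel_left Y (by norm_num)]
    at heq
  have hZ : (9 : ℤ) * (pellLucas k : ℤ) + (a2 : ℤ) * 10 ^ m + (a1 : ℤ)
      = (a1 : ℤ) * 10 ^ n + (a2 : ℤ) := by
    linear_combination 9 * heq - (a1 : ℤ) * hX + (a2 : ℤ) * hY
  have hE : 9 * pellLucas k + a2 * 10 ^ m + a1 = a1 * 10 ^ n + a2 := by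
    have h7 : ((9 * pellLucas k + a2 * 10 ^ m + a1 : ℕ) : ℤ)
        = ((a1 * 10 ^ n + a2 : ℕ) : ℤ) := by push_cast; linarith [hZ]
    exact_mod_cast h7
  rcases Nat.lt_or_ge m 3 with hm3 | hm3
  · -- m = 1 or m = 2 : use the master check
    have hB : Bcase m a1 a2 = true := by
      have hmaster := allCases_sound 162 (by decide)
      have h8 := hmaster ((m - 1) * 81 + (a1 - 1) * 9 + (a2 - 1)) (by omega)
      have e1 : ((m - 1) * 81 + (a1 - 1) * 9 + (a2 - 1)) / 81 + 1 = m := by omega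
      have e2 : ((m - 1) * 81 + (a1 - 1) * 9 + (a2 - 1)) % 81 / 9 + 1 = a1 := by omega
      have e3 : ((m - 1) * 81 + (a1 - 1) * 9 + (a2 - 1)) % 9 + 1 = a2 := by omega
      rwa [e1, e2, e3] at h8
    have h4n : 10 ^ n % 10000 = 0 := by
      have : (10000 : ℕ) ∣ 10 ^ n := by
        calc (10000 : ℕ) = 10 ^ 4 := by norm_num
          _ ∣ 10 ^ n := pow_dvd_pow 10 (by omega)
      omega
    have hdn : ∀ j : ℕ, j ≤ 4 → 10 ^ n % 10 ^ j = 0 := by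
      intro j hj
      have : (10 : ℕ) ^ j ∣ 10 ^ n := pow_dvd_pow 10 (by omega)
      omega
    unfold Bcase at hB
    simp only [Bool.or_eq_true] at hB
    rcases hB with h | h | h | h | h | h | h | h | h | h | h
    · exact primeSound 7 6 6 m a1 a2 k n (by norm_num) (by norm_num) (perSound _ _ (by decide)) (by decide) h hE
    · exact primeSound 41 5 10 m a1 a2 k n (by norm_num) (by norm_num) (perSound _ _ (by decide)) (by decide) h hE
    · exact primeSound 239 7 14 m a1 a2 k n (by norm_num) (by norm_num) (perSound _ _ (by decide)) (by decide) h hE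
    · exact primeSound 37 3 76 m a1 a2 k n (by norm_num) (by norm_num) (perSound _ _ (by decide)) (by decide) h hE
    · exact primeSound 137 8 68 m a1 a2 k n (by norm_num) (by norm_num) (perSound _ _ (by decide)) (by decide) h hE
    · exact dSound 10 12 m a1 a2 k n (by norm_num) (perSound _ _ (by decide))
        (by simpa using hdn 1 (by norm_num)) h hE
    · exact dSound 100 60 m a1 a2 k n (by norm_num) (perSound _ _ (by decide))
        (by simpa using hdn 2 (by norm_num)) h hE
    · exact dSound 1000 300 m a1 a2 k n (by norm_num) (perSound _ _ (by decide))
        (by simpa using hdn 3 (by norm_num)) h hE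
    · exact dSound 10000 1500 m a1 a2 k n (by norm_num) (perSound _ _ (by decide))
        (by simpa using hdn 4 (by norm_num)) h hE
    · exact comboSound 31 15 30 m a1 a2 k n (by norm_num) (by norm_num)
        (perSound _ _ (by decide)) (perSound _ _ (by decide)) (by decide) h4n h hE
    · exact comboSound 751 125 150 m a1 a2 k n (by norm_num) (by norm_num)
        (perSound _ _ (by decide)) (perSound _ _ (by decide)) (by decide) h4n h hE
  · exact m3Sound m a1 a2 k n hm3 (by omega) ha11 ha19 ha21 ha29 (by decide) hE
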